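/- Fix n ≥ 1 and m ≥ 2n, and fix i with 0 ≤ i ≤ n−1 or m−n+1 ≤ i ≤ m. If p ∈ 𝒫ₙ has degree at most m, then the coefficient of x^i in p is nonnegative. (The first n and last n coefficients of a polynomial in 𝒫ₙ,ₘ are nonnegative.) -/

import Mathlib

open Polynomial

def PolyPres (n : ℕ) : Set (Polynomial ℝ) :=
  {p | ∀ A : Matrix (Fin n) (Fin n) ℝ, (∀ i j, 0 ≤ A i j) →
    ∀ i j, 0 ≤ (aeval A p) i j}

open Fin.NatCast

/-- The nilpotent shift matrix. -/
def Nmat (N : ℕ) : Matrix (Fin (N+1)) (Fin (N+1)) ℝ :=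
  fun a b => if (b:ℕ) = (a:ℕ) + 1 then 1 else 0

/-- The cyclic permutation matrix. -/
def Pmat (N : ℕ) : Matrix (Fin (N+1)) (Fin (N+1)) ℝ :=
  fun a b => if b = a + 1 then 1 else 0

lemma Nmat_pow (N k : ℕ) : ∀ a b : Fin (N+1), (Nmat N ^ k) a b =
    if (b:ℕ) = (a:ℕ) + k then 1 else 0 := by
  induction k with
  | zero => intro a b; simp [Matrix.one_apply, Fin.ext_iff, eq_comm]
  | succ k ih =>
    intro a b
    rw [pow_succ, Matrix.mul_apply]
    simp only [ih, Nmat]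
    by_cases hab : (b:ℕ) = (a:ℕ) + (k+1)
    · have hk : (a:ℕ) + k < N+1 := by have := b.isLt; omega
      rw [Finset.sum_eq_single (⟨(a:ℕ) + k, hk⟩ : Fin (N+1))]
      · simp [hab, ← add_assoc]
      · intro c _ hc
        rw [if_neg, zero_mul]
        intro h; exact hc (Fin.ext h)
      · intro h; exact absurd (Finset.mem_univ _) h
    · rw [if_neg hab, Finset.sum_eq_zero]
      intro c _
      by_cases h1 : (c:ℕ) = (a:ℕ) + k
      · rw [if_pos h1, one_mul, if_neg]; omega
      · rw [if_neg h1, zero_mul]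

lemma Pmat_pow (N k : ℕ) : ∀ a b : Fin (N+1), (Pmat N ^ k) a b =
    if b = a + (k : Fin (N+1)) then 1 else 0 := by
  induction k with
  | zero => intro a b; simp [Matrix.one_apply, eq_comm]
  | succ k ih =>
    intro a b
    rw [pow_succ, Matrix.mul_apply]
    simp only [ih]
    rw [Finset.sum_eq_single (a + (k : Fin (N+1)))]
    · simp [Pmat, Nat.cast_add, Nat.cast_one, add_assoc]
    · intro c _ hc; rw [if_neg hc, zero_mul]
    · intro h; exact absurd (Finset.mem_univ _) h

theorem first_and_last_coeffs_nonneg (n m i : ℕ) (hn : 1 ≤ n) (hm : 2 * n ≤ m)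
    (hi : i ≤ m) (hrange : i ≤ n - 1 ∨ m - n + 1 ≤ i)
    (p : Polynomial ℝ) (hp : p ∈ PolyPres n) (hdeg : p.natDegree ≤ m) :
    0 ≤ p.coeff i := by
  obtain ⟨N, rfl⟩ : ∃ N, n = N + 1 := ⟨n - 1, (Nat.succ_pred_eq_of_pos hn).symm⟩
  have hdeg' : p.natDegree < m + 1 := Nat.lt_succ_of_le hdeg
  rcases hrange with hlow | hhigh
  · -- lower coefficients: use the nilpotent shift
    have hiN : i < N + 1 := by omega
    have key := hp (Nmat N) (by intro a b; unfold Nmat; split <;> norm_num)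
      0 ⟨i, hiN⟩
    rw [aeval_eq_sum_range' hdeg', Matrix.sum_apply] at key
    have : ∀ k ∈ Finset.range (m+1),
        (p.coeff k • (Nmat N) ^ k) 0 (⟨i, hiN⟩ : Fin (N+1)) =
        if k = i then p.coeff i else 0 := by
      intro k _
      rw [Matrix.smul_apply, Nmat_pow]
      simp only [Fin.val_zero, zero_add, smul_eq_mul]
      by_cases h : k = i
      · subst h; simp
      · rw [if_neg (by simpa [eq_comm] using h), if_neg h, mul_zero]
    rw [Finset.sum_congr rfl this, Finset.sum_ite_eq'
      (Finset.range (m+1)) i (fun _ => p.coeff i)] at key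
    simpa [Finset.mem_range.mpr (Nat.lt_succ_of_le hi)] using key
  · -- upper coefficients: use the cyclic permutation matrix
    set q : Polynomial ℝ := ∑ k ∈ Finset.range (m+1),
      if (k : Fin (N+1)) = (i : Fin (N+1)) then C (p.coeff k) * X ^ k else 0 with hq
    have hcoeff : q.coeff i = p.coeff i := by
      rw [hq, finset_sum_coeff, Finset.sum_eq_single i]
      · simp
      · intro k _ hk
        split
        · rw [coeff_C_mul, coeff_X_pow, if_neg (fun h => hk h.symm), mul_zero]
        · simp
      · intro h; exact absurd (Finset.mem_range.mpr (Nat.lt_succ_of_le hi)) h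
    have hkle : ∀ k ≤ m, (k : Fin (N+1)) = (i : Fin (N+1)) → k ≤ i := by
      intro k hk hcast
      by_contra hlt
      push_neg at hlt
      have hmod : k % (N+1) = i % (N+1) := by
        have := congrArg Fin.val hcast
        simpa [Fin.val_natCast] using this
      have hdvd : (N+1) ∣ k - i := (Nat.modEq_iff_dvd' (le_of_lt hlt)).mp
        (Nat.ModEq.symm hmod)
      obtain ⟨d, hd⟩ := hdvd
      rcases Nat.eq_zero_or_pos d with rfl | hdpos
      · omega
      · have h2 : N + 1 ≤ (N+1) * d := Nat.le_mul_of_pos_right (N+1) hdpos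
        omega
    have hqdeg : q.natDegree ≤ i := by
      apply natDegree_sum_le_of_forall_le
      intro k hk
      split
      · next h =>
        exact le_trans (natDegree_C_mul_X_pow_le _ _)
          (hkle k (Nat.lt_succ_iff.mp (Finset.mem_range.mp hk)) h)
      · simp
    have hqnonneg : ∀ t : ℝ, 0 ≤ t → 0 ≤ q.eval t := by
      intro t ht
      have key := hp (t • Pmat N)
        (by intro a b; rw [Matrix.smul_apply]; unfold Pmat
            split <;> simp [ht])
        0 (i : Fin (N+1))
      rw [aeval_eq_sum_range' hdeg', Matrix.sum_apply] at key
      have heq : ∀ k ∈ Finset.range (m+1),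
          (p.coeff k • (t • Pmat N) ^ k) 0 ((i : Fin (N+1))) =
          ((if (k : Fin (N+1)) = (i : Fin (N+1)) then C (p.coeff k) * X ^ k
            else 0 : Polynomial ℝ)).eval t := by
        intro k _
        rw [Matrix.smul_apply, _root_.smul_pow, Matrix.smul_apply, Pmat_pow]
        simp only [zero_add, smul_eq_mul]
        by_cases h : (k : Fin (N+1)) = (i : Fin (N+1))
        · rw [if_pos h.symm, if_pos h, eval_mul, eval_C, eval_pow, eval_X, mul_one]
        · rw [if_neg (fun hh => h hh.symm), if_neg h]
          simp
      rw [Finset.sum_congr rfl heq, ← eval_finset_sum, ← hq] at key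
      exact key
    rw [← hcoeff]
    by_contra hneg
    push_neg at hneg
    have hq0 : q ≠ 0 := fun h => by simp [h] at hneg
    have hqd : q.natDegree = i :=
      le_antisymm hqdeg (le_natDegree_of_ne_zero hneg.ne)
    have hlc : q.leadingCoeff ≤ 0 := by
      rw [leadingCoeff, hqd]; exact hneg.le
    have hdegpos : 0 < q.degree := by
      rw [degree_eq_natDegree hq0, hqd]
      have : 0 < i := by omega
      exact_mod_cast this
    have htend := tendsto_atBot_of_leadingCoeff_nonpos q hdegpos hlc
    obtain ⟨t, ht1, ht2⟩ := ((htend.eventually (Filter.eventually_lt_atBot 0)).and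
      (Filter.eventually_ge_atTop (0:ℝ))).exists
    exact absurd (hqnonneg t ht2) (not_le.mpr ht1)
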